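/- Suppose λ̂ ∈ [ε/(ε+2B), 1], and R, C : H → ℝ satisfy: (i) λ̂ R(ĥ) + max_{λ∈[0,1]} (1−λ)(C(ĥ) − ε) ≤ min_{h∈H} [ λ̂ R(h) + (1−λ̂)(C(h) − ε) ] + Δ for some Δ ≥ 0; and (ii) there exists a feasible h̃ ∈ H with C(h̃) ≤ ε. Then R(ĥ) ≤ R(h̃) + (1 + 2B/ε) Δ. -/
import Mathlib


/-- If λ̂ ∈ [ε/(ε+2B), 1] and (i) λ̂ R(ĥ) + max_{λ∈[0,1]} (1−λ)(C(ĥ) − ε) is within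
Δ of the minimum of the Lagrangian λ̂ R(h) + (1−λ̂)(C(h) − ε) over H, and (ii) some
h̃ ∈ H is feasible (C(h̃) ≤ ε), then R(ĥ) ≤ R(h̃) + (1 + 2B/ε) Δ. -/
theorem stmt_13 {H : Type*} (R C : H → ℝ) (B ε Δ lamhat : ℝ)
    (hε : 0 < ε) (hB : 0 ≤ B) (hΔ : 0 ≤ Δ)
    (hlam : lamhat ∈ Set.Icc (ε / (ε + 2 * B)) 1)
    (hhat : H)
    (hi : ∀ h : H,
      lamhat * R hhat + max ((1 - 0) * (C hhat - ε)) ((1 - 1) * (C hhat - ε)) ≤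
        lamhat * R h + (1 - lamhat) * (C h - ε) + Δ)
    (htil : H) (hfeas : C htil ≤ ε) :
    R hhat ≤ R htil + (1 + 2 * B / ε) * Δ := by
  obtain ⟨hl, hu⟩ := hlam
  have hden : 0 < ε + 2 * B := by linarith
  have hlampos : 0 < lamhat := lt_of_lt_of_le (div_pos hε hden) hl
  have h1 := hi htil
  have hmax : (0:ℝ) ≤ max ((1 - 0) * (C hhat - ε)) ((1 - 1) * (C hhat - ε)) := by
    have : ((1:ℝ) - 1) * (C hhat - ε) = 0 := by ring
    rw [← this]; exact le_max_right _ _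
  have hneg : (1 - lamhat) * (C htil - ε) ≤ 0 :=
    mul_nonpos_of_nonneg_of_nonpos (by linarith) (by linarith)
  have key : lamhat * (R hhat - R htil) ≤ Δ := by nlinarith
  -- 1/lamhat ≤ 1 + 2B/ε
  have hinv : Δ / lamhat ≤ (1 + 2 * B / ε) * Δ := by
    have h2 : ε / (ε + 2 * B) ≤ lamhat := hl
    have h3 : 1 / lamhat ≤ (ε + 2 * B) / ε := by
      rw [div_le_div_iff₀ hlampos hε]
      have := (div_le_iff₀ hden).mp h2
      nlinarith
    have h4 : (ε + 2 * B) / ε = 1 + 2 * B / ε := by field_simp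
    calc Δ / lamhat = (1 / lamhat) * Δ := by ring
      _ ≤ ((ε + 2 * B) / ε) * Δ := by
          exact mul_le_mul_of_nonneg_right h3 hΔ
      _ = (1 + 2 * B / ε) * Δ := by rw [h4]
  have : R hhat - R htil ≤ Δ / lamhat := by
    rw [le_div_iff₀ hlampos]; nlinarith
  linarith
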